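/- There is a constant C₁ > 0 such that for any independent random variables z_1,...,z_n where z_j takes value 1 with probability p_j and value -1 with probability 1-p_j, and for any integer t, the probability that z_1 + ... + z_n = t is at most C₁/σ, where σ² = Σ_j p_j(1-p_j). -/

import Mathlib

open Finset
open Real MeasureTheory intervalIntegral


lemma chi_integral (k : ℤ) :
    ∫ θ in (-π)..π, Complex.exp ((k : ℂ) * θ * Complex.I) =
      if k = 0 then (2 * π : ℝ) else 0 := by
  rcases eq_or_ne k 0 with hk | hk
  · simp [hk, two_mul]
  · have hc : (k : ℂ) * Complex.I ≠ 0 := by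
      simp [Complex.ext_iff, Complex.I_ne_zero, hk]
    have : ∀ θ : ℝ, (k : ℂ) * θ * Complex.I = ((k : ℂ) * Complex.I) * θ := by
      intro θ; ring
    simp only [this]
    rw [integral_exp_mul_complex hc]
    have h1 : Complex.exp ((k : ℂ) * Complex.I * (π : ℝ)) = (-1 : ℂ) ^ k := by
      rw [show (k : ℂ) * Complex.I * (π : ℝ) = k * (π * Complex.I) by ring,
        Complex.exp_int_mul, Complex.exp_pi_mul_I]
    have h2 : Complex.exp ((k : ℂ) * Complex.I * ((-π : ℝ) : ℂ)) = (-1 : ℂ) ^ (-k) := by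
      rw [show (k : ℂ) * Complex.I * ((-π : ℝ) : ℂ) = (-k : ℤ) * (π * Complex.I) by push_cast; ring,
        Complex.exp_int_mul, Complex.exp_pi_mul_I]
    rw [h1, h2]
    have : ((-1 : ℂ) ^ k) = (-1 : ℂ) ^ (-k) := by
      rcases Int.even_or_odd k with h | h
      · rw [h.neg_one_zpow, (h.neg).neg_one_zpow]
      · rw [h.neg_one_zpow, (h.neg).neg_one_zpow]
    rw [← this]
    simp [hk]

lemma rep (n : ℕ) (p : Fin n → ℝ) (t : ℤ) :
    ((∑ z ∈ (Finset.univ : Finset (Fin n → Bool)).filter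
        (fun z => (∑ j, if z j then (1 : ℤ) else -1) = t),
      ∏ j, if z j then p j else 1 - p j : ℝ) : ℂ) * (2 * π) =
    ∫ θ in (-π)..π, (∏ j, ((p j : ℂ) * Complex.exp (θ * Complex.I)
        + (1 - (p j : ℂ)) * Complex.exp (-θ * Complex.I)))
      * Complex.exp (-(t : ℂ) * θ * Complex.I) := by
  have expand : ∀ θ : ℝ,
      (∏ j, ((p j : ℂ) * Complex.exp (θ * Complex.I)
        + (1 - (p j : ℂ)) * Complex.exp (-θ * Complex.I)))
      * Complex.exp (-(t : ℂ) * θ * Complex.I)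
      = ∑ z : Fin n → Bool, ((∏ j, if z j then (p j : ℂ) else 1 - p j))
          * Complex.exp ((((∑ j, if z j then (1 : ℤ) else -1) - t : ℤ) : ℂ)
              * θ * Complex.I) := by
    intro θ
    have h1 : ∏ j, ((p j : ℂ) * Complex.exp (θ * Complex.I)
        + (1 - (p j : ℂ)) * Complex.exp (-θ * Complex.I))
        = ∑ z ∈ Fintype.piFinset (fun _ : Fin n => (Finset.univ : Finset Bool)),
            ∏ j, ((if z j then (p j : ℂ) else 1 - p j)
              * Complex.exp ((if z j then (1 : ℂ) else -1) * θ * Complex.I)) := by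
      rw [← Finset.prod_univ_sum (fun _ => (Finset.univ : Finset Bool))
        (fun j b => (if b then (p j : ℂ) else 1 - p j)
          * Complex.exp ((if b then (1 : ℂ) else -1) * θ * Complex.I))]
      refine Finset.prod_congr rfl fun j _ => ?_
      simp [Fintype.sum_bool]
    rw [h1, Fintype.piFinset_univ, Finset.sum_mul]
    refine Finset.sum_congr rfl fun z _ => ?_
    rw [Finset.prod_mul_distrib, ← Complex.exp_sum]
    rw [mul_assoc, ← Complex.exp_add]
    congr 1
    have : ∑ j, (if z j then (1 : ℂ) else -1) * θ * Complex.I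
        = ((∑ j, if z j then (1 : ℤ) else -1 : ℤ) : ℂ) * θ * Complex.I := by
      rw [← Finset.sum_mul, ← Finset.sum_mul]
      congr 2
      push_cast
      exact Finset.sum_congr rfl fun j _ => by rcases hz : z j <;> simp
    rw [this]
    push_cast
    ring
  rw [intervalIntegral.integral_congr (g := fun θ =>
      ∑ z : Fin n → Bool, ((∏ j, if z j then (p j : ℂ) else 1 - p j))
        * Complex.exp ((((∑ j, if z j then (1 : ℤ) else -1) - t : ℤ) : ℂ)
            * θ * Complex.I)) (fun θ _ => expand θ)]
  rw [intervalIntegral.integral_finset_sum]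
  · have : ∀ z : Fin n → Bool,
        (∫ θ in (-π)..π, ((∏ j, if z j then (p j : ℂ) else 1 - p j))
          * Complex.exp ((((∑ j, if z j then (1 : ℤ) else -1) - t : ℤ) : ℂ)
              * θ * Complex.I))
        = ((∏ j, if z j then (p j : ℂ) else 1 - p j))
            * (if (∑ j, if z j then (1 : ℤ) else -1) = t then ((2 * π : ℝ) : ℂ) else 0) := by
      intro z
      rw [intervalIntegral.integral_const_mul, chi_integral]
      by_cases h : (∑ j, if z j then (1 : ℤ) else -1) = t
      · simp [h]
      · simp [h, sub_ne_zero.mpr h]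
    simp only [this]
    push_cast [apply_ite ((↑·) : ℝ → ℂ)]
    rw [Finset.sum_mul, Finset.sum_filter]
    refine Finset.sum_congr rfl fun z _ => ?_
    split_ifs <;> simp [apply_ite ((↑·) : ℝ → ℂ)]
  · intro z _
    apply Continuous.intervalIntegrable
    fun_prop


-- Lemma 3a: single factor norm bound
lemma factor_bound (p : ℝ) (hp0 : 0 ≤ p) (hp1 : p ≤ 1) (θ : ℝ) :
    ‖(p : ℂ) * Complex.exp (θ * Complex.I) + (1 - (p : ℂ)) * Complex.exp (-θ * Complex.I)‖
      ≤ Real.exp (-(2 * (p * (1 - p))) * Real.sin θ ^ 2) := by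
  have hval : (p : ℂ) * Complex.exp (θ * Complex.I) + (1 - (p : ℂ)) * Complex.exp (-θ * Complex.I)
      = (Real.cos θ : ℂ) + ((2 * p - 1) * Real.sin θ : ℝ) * Complex.I := by
    rw [show ((θ : ℂ) * Complex.I) = (θ : ℂ) * Complex.I by rfl]
    rw [Complex.exp_mul_I, show (-(θ:ℝ) : ℂ) * Complex.I = (-θ : ℝ) * Complex.I by push_cast; ring]
    rw [Complex.exp_mul_I]
    push_cast
    simp [Complex.sin_neg, Complex.cos_neg, Complex.sin_ofReal_re, Complex.ofReal_sin,
      Complex.ofReal_cos]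
    ring
  rw [hval]
  have hnorm : ‖(Real.cos θ : ℂ) + ((2 * p - 1) * Real.sin θ : ℝ) * Complex.I‖
      = Real.sqrt (1 - 4 * (p * (1 - p)) * Real.sin θ ^ 2) := by
    rw [Complex.norm_def, Complex.normSq_add_mul_I]
    congr 1
    have := Real.sin_sq_add_cos_sq θ
    nlinarith [Real.sin_sq_add_cos_sq θ]
  rw [hnorm]
  have h1 : 1 - 4 * (p * (1 - p)) * Real.sin θ ^ 2
      ≤ Real.exp (-(4 * (p * (1 - p)) * Real.sin θ ^ 2)) := by
    linarith [Real.add_one_le_exp (-(4 * (p * (1 - p)) * Real.sin θ ^ 2))]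
  calc Real.sqrt (1 - 4 * (p * (1 - p)) * Real.sin θ ^ 2)
      ≤ Real.sqrt (Real.exp (-(4 * (p * (1 - p)) * Real.sin θ ^ 2))) := Real.sqrt_le_sqrt h1
    _ = Real.exp (-(2 * (p * (1 - p))) * Real.sin θ ^ 2) := by
        rw [show Real.exp (-(4 * (p * (1 - p)) * Real.sin θ ^ 2))
            = Real.exp (-(2 * (p * (1 - p))) * Real.sin θ ^ 2) ^ 2 by
          rw [← Real.exp_nat_mul]; ring_nf]
        exact Real.sqrt_sq (Real.exp_pos _).le

-- Lemma 3b: product bound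
lemma prod_bound (n : ℕ) (p : Fin n → ℝ) (hp : ∀ j, 0 ≤ p j ∧ p j ≤ 1) (θ : ℝ) (t : ℤ) :
    ‖(∏ j, ((p j : ℂ) * Complex.exp (θ * Complex.I)
        + (1 - (p j : ℂ)) * Complex.exp (-θ * Complex.I)))
      * Complex.exp (-(t : ℂ) * θ * Complex.I)‖
      ≤ Real.exp (-(2 * ∑ j, p j * (1 - p j)) * Real.sin θ ^ 2) := by
  rw [norm_mul]
  have h2 : ‖Complex.exp (-(t : ℂ) * θ * Complex.I)‖ = 1 := by
    rw [Complex.norm_exp]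
    simp
  rw [h2, mul_one, norm_prod]
  calc ∏ j, ‖(p j : ℂ) * Complex.exp (θ * Complex.I)
        + (1 - (p j : ℂ)) * Complex.exp (-θ * Complex.I)‖
      ≤ ∏ j, Real.exp (-(2 * (p j * (1 - p j))) * Real.sin θ ^ 2) := by
        refine Finset.prod_le_prod (fun j _ => norm_nonneg _)
          (fun j _ => factor_bound (p j) (hp j).1 (hp j).2 θ)
    _ = Real.exp (-(2 * ∑ j, p j * (1 - p j)) * Real.sin θ ^ 2) := by
        rw [← Real.exp_sum]
        have : -(2 * ∑ j, p j * (1 - p j)) = ∑ j, -(2 * (p j * (1 - p j))) := by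
          rw [Finset.mul_sum, ← Finset.sum_neg_distrib]
        rw [this, Finset.sum_mul]


lemma gauss_bound {s : ℝ} (hs : 0 < s) :
    ∫ θ in (-π)..π, Real.exp (-(2 * s) * Real.sin θ ^ 2)
      ≤ 2 * Real.sqrt (π ^ 3 / (8 * s)) := by
  set f : ℝ → ℝ := fun θ => Real.exp (-(2 * s) * Real.sin θ ^ 2) with hf
  have hcont : Continuous f := by fun_prop
  have hii : ∀ a b : ℝ, IntervalIntegrable f volume a b :=
    fun a b => hcont.intervalIntegrable a b
  have heven : ∫ x in (-π)..(0:ℝ), f x = ∫ x in (0:ℝ)..π, f x := by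
    have h := intervalIntegral.integral_comp_neg (a := 0) (b := π) f
    calc ∫ x in (-π)..(0:ℝ), f x = ∫ x in (-π)..(-0:ℝ), f x := by norm_num
      _ = ∫ x in (0:ℝ)..π, f (-x) := h.symm
      _ = ∫ x in (0:ℝ)..π, f x := intervalIntegral.integral_congr fun x _ => by simp [hf]
  have hrefl : ∫ x in (π/2)..π, f x = ∫ x in (0:ℝ)..(π/2), f x := by
    have h := intervalIntegral.integral_comp_sub_left (a := 0) (b := π/2) f π
    calc ∫ x in (π/2)..π, f x = ∫ x in (π - π/2)..(π - 0), f x := by rw [show π - π/2 = π/2 from by ring, sub_zero]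
      _ = ∫ x in (0:ℝ)..(π/2), f (π - x) := h.symm
      _ = ∫ x in (0:ℝ)..(π/2), f x :=
          intervalIntegral.integral_congr fun x _ => by simp [hf, Real.sin_pi_sub]
  have hsplit : ∫ x in (-π)..π, f x = 4 * ∫ x in (0:ℝ)..(π/2), f x := by
    rw [← intervalIntegral.integral_add_adjacent_intervals (hii (-π) 0) (hii 0 π), heven,
      ← intervalIntegral.integral_add_adjacent_intervals (hii 0 (π/2)) (hii (π/2) π), hrefl]
    ring
  rw [hsplit]
  set b : ℝ := 8 * s / π ^ 2 with hb
  have hbpos : 0 < b := by positivity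
  have hmono : ∫ x in (0:ℝ)..(π/2), f x
      ≤ ∫ x in (0:ℝ)..(π/2), Real.exp (-b * x ^ 2) := by
    refine intervalIntegral.integral_mono_on (by linarith [Real.pi_pos]) (hii 0 (π/2))
      ((by fun_prop : Continuous fun x : ℝ => Real.exp (-b * x ^ 2)).intervalIntegrable 0 (π/2))
      (fun x hx => ?_)
    apply Real.exp_le_exp.mpr
    have hsin : 2 / π * x ≤ Real.sin x := Real.mul_le_sin hx.1 hx.2
    have h0 : 0 ≤ 2 / π * x := mul_nonneg (by positivity) hx.1
    have hpi := Real.pi_pos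
    have hsq : (2 / π * x) ^ 2 ≤ Real.sin x ^ 2 := sq_le_sq' (by linarith) hsin
    have h2 : 4 / π ^ 2 * x ^ 2 ≤ Real.sin x ^ 2 := by
      calc 4 / π ^ 2 * x ^ 2 = (2 / π * x) ^ 2 := by field_simp; ring
        _ ≤ Real.sin x ^ 2 := hsq
    have h3 := mul_le_mul_of_nonneg_left h2 (by positivity : (0:ℝ) ≤ 2 * s)
    rw [hb]
    have h4 : 2 * s * (4 / π ^ 2 * x ^ 2) = 8 * s / π ^ 2 * x ^ 2 := by ring
    linarith [h3, h4 ▸ h3]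
  have hgauss : ∫ x in (0:ℝ)..(π/2), Real.exp (-b * x ^ 2)
      ≤ Real.sqrt (π / b) / 2 := by
    rw [← integral_gaussian_Ioi b]
    rw [intervalIntegral.integral_of_le (by positivity : (0:ℝ) ≤ π/2)]
    apply setIntegral_mono_set
    · exact (integrable_exp_neg_mul_sq hbpos).integrableOn
    · exact Filter.Eventually.of_forall fun x => (Real.exp_pos _).le
    · exact Filter.Eventually.of_forall Set.Ioc_subset_Ioi_self
  have : Real.sqrt (π / b) = Real.sqrt (π ^ 3 / (8 * s)) := by
    congr 1
    rw [hb]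
    field_simp
  linarith [hmono, hgauss, this ▸ hgauss]

/-- Anti-concentration for sums of independent ±1 random variables:
`Pr[z₁ + ⋯ + zₙ = t] ≤ C₁/σ` where `Pr[z_j = 1] = p_j`, `Pr[z_j = -1] = 1 - p_j`
and `σ² = ∑_j p_j (1 - p_j)`. -/
theorem anticoncentration_pm_one :
    ∃ C : ℝ, 0 < C ∧ ∀ (n : ℕ) (p : Fin n → ℝ),
      (∀ j, 0 ≤ p j ∧ p j ≤ 1) →
      0 < ∑ j, p j * (1 - p j) →
      ∀ t : ℤ,
        (∑ z ∈ (Finset.univ : Finset (Fin n → Bool)).filter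
            (fun z => (∑ j, if z j then (1 : ℤ) else -1) = t),
          ∏ j, if z j then p j else 1 - p j) ≤
        C / Real.sqrt (∑ j, p j * (1 - p j)) := by
  refine ⟨2, by norm_num, fun n p hp hs t => ?_⟩
  set s : ℝ := ∑ j, p j * (1 - p j) with hsdef
  set S : ℝ := ∑ z ∈ (Finset.univ : Finset (Fin n → Bool)).filter
      (fun z => (∑ j, if z j then (1 : ℤ) else -1) = t),
    ∏ j, if z j then p j else 1 - p j with hSdef
  have hSnn : 0 ≤ S := by
    refine Finset.sum_nonneg fun z _ => Finset.prod_nonneg fun j _ => ?_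
    rcases hp j with ⟨h1, h2⟩
    split_ifs <;> linarith
  have hpi := Real.pi_pos
  -- continuity of the complex integrand
  have hcont : Continuous (fun θ : ℝ => (∏ j, ((p j : ℂ) * Complex.exp (θ * Complex.I)
      + (1 - (p j : ℂ)) * Complex.exp (-θ * Complex.I)))
      * Complex.exp (-(t : ℂ) * θ * Complex.I)) := by fun_prop
  have hnorm : S * (2 * π) = ‖∫ θ in (-π)..π,
      (∏ j, ((p j : ℂ) * Complex.exp (θ * Complex.I)
        + (1 - (p j : ℂ)) * Complex.exp (-θ * Complex.I)))
      * Complex.exp (-(t : ℂ) * θ * Complex.I)‖ := by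
    rw [← rep n p t, norm_mul]
    rw [show ((2 : ℂ) * (π : ℝ)) = (((2 * π : ℝ)) : ℂ) by push_cast; ring]
    rw [Complex.norm_real, Complex.norm_real, Real.norm_eq_abs, Real.norm_eq_abs,
      abs_of_nonneg hSnn, abs_of_nonneg (by positivity : (0:ℝ) ≤ 2 * π)]
  have hle1 : ‖∫ θ in (-π)..π,
      (∏ j, ((p j : ℂ) * Complex.exp (θ * Complex.I)
        + (1 - (p j : ℂ)) * Complex.exp (-θ * Complex.I)))
      * Complex.exp (-(t : ℂ) * θ * Complex.I)‖
      ≤ ∫ θ in (-π)..π, ‖(∏ j, ((p j : ℂ) * Complex.exp (θ * Complex.I)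
        + (1 - (p j : ℂ)) * Complex.exp (-θ * Complex.I)))
      * Complex.exp (-(t : ℂ) * θ * Complex.I)‖ :=
    intervalIntegral.norm_integral_le_integral_norm (by linarith)
  have hle2 : ∫ θ in (-π)..π, ‖(∏ j, ((p j : ℂ) * Complex.exp (θ * Complex.I)
        + (1 - (p j : ℂ)) * Complex.exp (-θ * Complex.I)))
      * Complex.exp (-(t : ℂ) * θ * Complex.I)‖
      ≤ ∫ θ in (-π)..π, Real.exp (-(2 * s) * Real.sin θ ^ 2) := by
    refine intervalIntegral.integral_mono_on (by linarith) (hcont.norm.intervalIntegrable _ _)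
      ((by fun_prop : Continuous fun θ : ℝ =>
        Real.exp (-(2 * s) * Real.sin θ ^ 2)).intervalIntegrable _ _)
      (fun θ _ => prod_bound n p hp θ t)
  have hle3 := gauss_bound hs
  have key : S * (2 * π) ≤ 2 * Real.sqrt (π ^ 3 / (8 * s)) := by
    rw [hnorm]; linarith
  -- algebra: sqrt(π³/(8s)) ≤ 2π/√s
  have hsq : Real.sqrt (π ^ 3 / (8 * s)) ≤ 2 * π / Real.sqrt s := by
    rw [show π ^ 3 / (8 * s) = (π ^ 3 / 8) / s from by ring,
      Real.sqrt_div (by positivity) s]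
    have h8 : Real.sqrt (π ^ 3 / 8) ≤ 2 * π := by
      rw [show (2 * π) = Real.sqrt ((2 * π) ^ 2) from
        (Real.sqrt_sq (by positivity)).symm]
      apply Real.sqrt_le_sqrt
      nlinarith [Real.pi_le_four, Real.pi_pos]
    gcongr
  have hfin : S ≤ 2 * (2 * π / Real.sqrt s) / (2 * π) := by
    rw [le_div_iff₀ (by positivity)]
    calc S * (2 * π) ≤ 2 * Real.sqrt (π ^ 3 / (8 * s)) := key
      _ ≤ 2 * (2 * π / Real.sqrt s) := by linarith
  have heq : 2 * (2 * π / Real.sqrt s) / (2 * π) = 2 / Real.sqrt s := by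
    have : Real.sqrt s ≠ 0 := ne_of_gt (Real.sqrt_pos.mpr hs)
    field_simp
  rw [heq] at hfin
  exact hfin
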